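/- Let G = C(α_1,…,α_{2k}) be a C-graph. Then −1 is a root of the characteristic polynomial of the quotient matrix Q_π(G) if and only if α_2 = 1. Moreover, if α_2 = 1, then −1 is a simple root (multiplicity exactly one) of the characteristic polynomial of Q_π(G). -/

import Mathlib

open Matrix BigOperators
open scoped Classical

/-- The equivalence splitting off the last cell of `Σ j : Fin (m+1), Fin (α j)`. -/
def splitLast (α : ℕ → ℕ) (m : ℕ) :
    (Σ j : Fin (m + 1), Fin (α j.val)) ≃ (Σ j : Fin m, Fin (α j.val)) ⊕ Fin (α m) where
  toFun x :=
    if h : x.1.val < m then Sum.inl ⟨⟨x.1.val, h⟩, x.2⟩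
    else Sum.inr (Fin.cast (congrArg α
      (Nat.le_antisymm (Nat.lt_succ_iff.mp x.1.isLt) (Nat.le_of_not_lt h))) x.2)
  invFun x :=
    match x with
    | Sum.inl y => ⟨⟨y.1.val, Nat.lt_succ_of_lt y.1.isLt⟩, y.2⟩
    | Sum.inr a => ⟨⟨m, Nat.lt_succ_self m⟩, a⟩
  left_inv := by
    rintro ⟨⟨jv, hj⟩, a⟩
    by_cases h : jv < m
    · simp [h]
    · have hm : jv = m := Nat.le_antisymm (Nat.lt_succ_iff.mp hj) (Nat.le_of_not_lt h)
      subst hm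
      simp [h, Fin.cast]
  right_inv := by
    rintro (⟨⟨jv, hj⟩, a⟩ | a)
    · simp [hj]
    · simp [Fin.cast]

/-- The cograph `C(α 0, α 1, …, α (m-1))` (1-indexed in the paper: `C(α_1,…,α_m)`),
defined recursively: `C(α_1)` is the complement of the complete graph `K_{α_1}`, and
`C(α_1,…,α_i)` is the complement of the disjoint union of `C(α_1,…,α_{i-1})` and `K_{α_i}`.
The vertices added at step `j` (the cell `C_j`) are the pairs `⟨j, a⟩`. -/
def cographC (α : ℕ → ℕ) : (m : ℕ) → SimpleGraph (Σ j : Fin m, Fin (α j.val))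
  | 0 => ⊥
  | m + 1 =>
      SimpleGraph.comap (splitLast α m)
        ((cographC α m ⊕g (⊤ : SimpleGraph (Fin (α m))))ᶜ)

/-- The real adjacency matrix of a finite simple graph. -/
noncomputable def adjMat {V : Type*} [Fintype V] (G : SimpleGraph V) : Matrix V V ℝ :=
  Matrix.of fun u v => if G.Adj u v then (1 : ℝ) else 0

/-- The quotient matrix `Q_π(G)` of the C-graph `C(α 0, …, α (2k-1))`.  Rows and columns are
indexed by `Fin (2*k)`; the paper's 1-based index `i` corresponds to `i.val + 1` here. -/
def quotientMatrix (α : ℕ → ℕ) (k : ℕ) : Matrix (Fin (2 * k)) (Fin (2 * k)) ℝ :=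
  Matrix.of fun i j =>
    if i = j then (if Odd (i.val + 1) then (α i.val : ℝ) - 1 else 0)
    else if (Even (i.val + 1) ∧ j.val < i.val) ∨ (Even (j.val + 1) ∧ i.val < j.val)
      then (α j.val : ℝ) else 0

open Polynomial

lemma oddSum (k t : ℕ) (g : ℕ → ℝ) :
    ∑ m ∈ Finset.range (2*k), (if Odd m ∧ 2*t < m then g m else 0)
      = ∑ r ∈ Finset.Ico t k, g (2*r+1) := by
  induction k with
  | zero => simp
  | succ k ih =>
    have h2 : 2*(k+1) = 2*k+1+1 := by ring
    have e1 : (if Odd (2*k) ∧ 2*t < 2*k then g (2*k) else 0) = 0 := by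
      rw [if_neg]; rintro ⟨h, -⟩; rw [Nat.odd_iff] at h; omega
    have e2 : (if Odd (2*k+1) ∧ 2*t < 2*k+1 then g (2*k+1) else 0)
        = if t ≤ k then g (2*k+1) else 0 := by
      by_cases ht : t ≤ k
      · rw [if_pos ⟨by rw [Nat.odd_iff]; omega, by omega⟩, if_pos ht]
      · rw [if_neg (fun h => ht (by omega)), if_neg ht]
    rw [h2, Finset.sum_range_succ, Finset.sum_range_succ, ih, e1, e2, add_zero]
    by_cases ht : t ≤ k
    · rw [Finset.sum_Ico_succ_top ht, if_pos ht]
    · rw [Finset.Ico_eq_empty (by omega), Finset.Ico_eq_empty (by omega), if_neg ht]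
      simp

lemma prefSum (n c : ℕ) (h : c ≤ n) (g : ℕ → ℝ) :
    ∑ m ∈ Finset.range n, (if m < c then g m else 0) = ∑ m ∈ Finset.range c, g m := by
  rw [← Finset.sum_filter]
  congr 1
  ext m
  simp only [Finset.mem_filter, Finset.mem_range]
  omega

lemma swapSum (k : ℕ) (F : ℕ → ℕ → ℝ) :
    ∑ t ∈ Finset.range k, ∑ s ∈ Finset.range t, F s t
      = ∑ s ∈ Finset.range k, ∑ t ∈ Finset.Ico (s+1) k, F s t := by
  induction k with
  | zero => simp
  | succ k ih =>
    have h : ∀ s ∈ Finset.range k, (∑ t ∈ Finset.Ico (s+1) (k+1), F s t)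
        = (∑ t ∈ Finset.Ico (s+1) k, F s t) + F s k := fun s hs =>
      Finset.sum_Ico_succ_top (by simp only [Finset.mem_range] at hs; omega) _
    rw [Finset.sum_range_succ, ih,
      Finset.sum_range_succ (fun s => ∑ t ∈ Finset.Ico (s+1) (k+1), F s t) k,
      Finset.Ico_self, Finset.sum_empty, add_zero, Finset.sum_congr rfl h,
      Finset.sum_add_distrib]

lemma splitIf (n : ℕ) (p q : ℕ → Prop) [DecidablePred p] [DecidablePred q]
    (h : ∀ m, ¬(p m ∧ q m)) (F G : ℕ → ℝ) :
    ∑ m ∈ Finset.range n, (if p m then F m else if q m then G m else 0)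
      = (∑ m ∈ Finset.range n, if p m then F m else 0)
        + ∑ m ∈ Finset.range n, if q m then G m else 0 := by
  rw [← Finset.sum_add_distrib]
  apply Finset.sum_congr rfl
  intro m _
  by_cases hp : p m
  · rw [if_pos hp, if_pos hp, if_neg (fun hq => h m ⟨hp, hq⟩), add_zero]
  · rw [if_neg hp, if_neg hp, zero_add]


/-- Core positivity lemma: from the reduced system, all tail sums and diagonal terms vanish. -/
lemma core (k : ℕ) (b g : ℕ → ℝ) (hb : ∀ t < k, 1 ≤ b t)
    (hS : ∀ t < k, (b t - 1) * g t
        + ∑ s ∈ Finset.range t, (∑ r ∈ Finset.Ico (s+1) k, b r * g r) = 0) :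
    (∀ s < k, (∑ r ∈ Finset.Ico (s+1) k, b r * g r) = 0) ∧
      (∀ t < k, (b t - 1) * g t = 0) := by
  set U : ℕ → ℝ := fun s => ∑ r ∈ Finset.Ico (s+1) k, b r * g r with hU
  have h0 : ∑ t ∈ Finset.range k,
      ((b t * g t) * ((b t - 1) * g t + ∑ s ∈ Finset.range t, U s)) = 0 :=
    Finset.sum_eq_zero fun t ht => by
      rw [hS t (Finset.mem_range.mp ht), mul_zero]
  have hexp : ∑ t ∈ Finset.range k,
      ((b t * g t) * ((b t - 1) * g t + ∑ s ∈ Finset.range t, U s))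
      = (∑ t ∈ Finset.range k, (b t - 1) * b t * g t ^ 2)
        + ∑ s ∈ Finset.range k, U s ^ 2 := by
    have e1 : ∀ t ∈ Finset.range k,
        (b t * g t) * ((b t - 1) * g t + ∑ s ∈ Finset.range t, U s)
        = (b t - 1) * b t * g t ^ 2 + ∑ s ∈ Finset.range t, (b t * g t) * U s := by
      intro t _
      rw [mul_add, Finset.mul_sum]
      ring_nf
    rw [Finset.sum_congr rfl e1, Finset.sum_add_distrib]
    congr 1
    rw [swapSum k (fun s t => (b t * g t) * U s)]
    apply Finset.sum_congr rfl
    intro s _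
    rw [← Finset.sum_mul]
    have : (∑ i ∈ Finset.Ico (s + 1) k, b i * g i) = U s := rfl
    rw [this]; ring
  rw [hexp] at h0
  have hnn1 : ∀ t ∈ Finset.range k, (0:ℝ) ≤ (b t - 1) * b t * g t ^ 2 := by
    intro t ht
    have h1 := hb t (Finset.mem_range.mp ht)
    have : (0:ℝ) ≤ (b t - 1) * b t := mul_nonneg (by linarith) (by linarith)
    positivity
  have hnn2 : ∀ s ∈ Finset.range k, (0:ℝ) ≤ U s ^ 2 := fun s _ => sq_nonneg _
  have hz1 : ∑ t ∈ Finset.range k, (b t - 1) * b t * g t ^ 2 = 0 := by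
    by_contra hne
    have l1 : 0 ≤ ∑ t ∈ Finset.range k, (b t - 1) * b t * g t ^ 2 :=
      Finset.sum_nonneg hnn1
    have l2 : 0 ≤ ∑ s ∈ Finset.range k, U s ^ 2 := Finset.sum_nonneg hnn2
    have : 0 < ∑ t ∈ Finset.range k, (b t - 1) * b t * g t ^ 2 :=
      lt_of_le_of_ne l1 (Ne.symm hne)
    linarith
  have hz2 : ∑ s ∈ Finset.range k, U s ^ 2 = 0 := by linarith
  constructor
  · intro s hs
    have := (Finset.sum_eq_zero_iff_of_nonneg hnn2).mp hz2 s (Finset.mem_range.mpr hs)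
    exact pow_eq_zero_iff (by norm_num) |>.mp this
  · intro t ht
    have h1 := (Finset.sum_eq_zero_iff_of_nonneg hnn1).mp hz1 t (Finset.mem_range.mpr ht)
    have hbt := hb t ht
    rcases mul_eq_zero.mp h1 with h2 | h2
    · rcases mul_eq_zero.mp h2 with h3 | h3
      · rw [h3, zero_mul]
      · linarith
    · have : g t = 0 := pow_eq_zero_iff (by norm_num) |>.mp h2
      rw [this, mul_zero]


lemma kernelShared (k : ℕ) (a f : ℕ → ℝ) (ha : ∀ i < 2*k, 1 ≤ a i)
    (hEv : ∀ t, 1 ≤ t → t < k →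
      a (2*t) * f (2*t) + (∑ r ∈ Finset.Ico t k, a (2*r+1) * f (2*r+1)) = 0)
    (hOd : ∀ t < k, (∑ m ∈ Finset.range (2*t+1), a m * f m) + f (2*t+1)
      + (∑ r ∈ Finset.Ico (t+1) k, a (2*r+1) * f (2*r+1)) = 0)
    (hP1 : 1 ≤ k → (∑ m ∈ Finset.range 2, a m * f m)
      = - ∑ r ∈ Finset.Ico 1 k, a (2*r+1) * f (2*r+1))
    (hS0 : (a 1 - 1) * f 1 = 0) :
    (∀ s < k, (∑ r ∈ Finset.Ico (s+1) k, a (2*r+1) * f (2*r+1)) = 0) ∧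
      (∀ t < k, (a (2*t+1) - 1) * f (2*t+1) = 0) := by
  set y : ℕ → ℝ := fun r => a (2*r+1) * f (2*r+1) with hy
  set V : ℕ → ℝ := fun t => ∑ r ∈ Finset.Ico t k, y r with hV
  have hVsucc : ∀ t < k, V t = y t + V (t+1) := fun t ht =>
    Finset.sum_eq_sum_Ico_succ_bot (by omega) y
  have hPre : ∀ t, t ≤ k →
      (∑ m ∈ Finset.range (2*t), a m * f m) = - ∑ s ∈ Finset.range t, V (s+1) := by
    intro t
    induction t with
    | zero => simp
    | succ t ih =>
      intro htk
      rcases Nat.eq_zero_or_pos t with rfl | hpos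
      · simpa using hP1 (by omega)
      · have h2 : 2*(t+1) = 2*t+1+1 := by ring
        rw [h2, Finset.sum_range_succ, Finset.sum_range_succ, ih (by omega),
          Finset.sum_range_succ]
        have hEvt := hEv t hpos (by omega)
        have hVs := hVsucc t (by omega)
        have hyt : a (2*t+1) * f (2*t+1) = y t := rfl
        have hVt : (∑ r ∈ Finset.Ico t k, a (2*r+1) * f (2*r+1)) = V t := rfl
        rw [hVt] at hEvt
        rw [hyt]
        have : a (2*t) * f (2*t) = - V t := by linarith
        rw [this, hVs]
        ring
  have hstar : ∀ t < k, (a (2*t+1) - 1) * f (2*t+1)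
      + ∑ s ∈ Finset.range t, V (s+1) = 0 := by
    intro t ht
    rcases Nat.eq_zero_or_pos t with rfl | hpos
    · simpa using hS0
    · have hOdt := hOd t ht
      have hEvt := hEv t hpos ht
      have hVt : (∑ r ∈ Finset.Ico t k, a (2*r+1) * f (2*r+1)) = V t := rfl
      have hUt : (∑ r ∈ Finset.Ico (t+1) k, a (2*r+1) * f (2*r+1)) = V (t+1) := rfl
      rw [hVt] at hEvt
      rw [hUt, Finset.sum_range_succ] at hOdt
      have hVs := hVsucc t ht
      have hPt := hPre t (by omega)
      have hyt : y t = a (2*t+1) * f (2*t+1) := rfl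
      rw [hPt] at hOdt
      -- hOdt : -∑ + a(2t)f(2t) + f(2t+1) + V(t+1) = 0 ; hEvt : a(2t)f(2t) + V t = 0
      -- hVs : V t = y t + V (t+1)
      rw [hVs] at hEvt
      rw [hyt] at hEvt
      linarith
  have := core k (fun t => a (2*t+1)) (fun t => f (2*t+1))
    (fun t ht => ha (2*t+1) (by omega)) hstar
  exact this

lemma kernelA (k : ℕ) (a f : ℕ → ℝ) (ha : ∀ i < 2*k, 1 ≤ a i) (ha1 : a 1 ≠ 1)
    (hEv : ∀ t < k,
      a (2*t) * f (2*t) + (∑ r ∈ Finset.Ico t k, a (2*r+1) * f (2*r+1)) = 0)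
    (hOd : ∀ t < k, (∑ m ∈ Finset.range (2*t+1), a m * f m) + f (2*t+1)
      + (∑ r ∈ Finset.Ico (t+1) k, a (2*r+1) * f (2*r+1)) = 0) :
    ∀ m < 2*k, f m = 0 := by
  set y : ℕ → ℝ := fun r => a (2*r+1) * f (2*r+1) with hy
  set V : ℕ → ℝ := fun t => ∑ r ∈ Finset.Ico t k, y r with hV
  have hVsucc : ∀ t < k, V t = y t + V (t+1) := fun t ht =>
    Finset.sum_eq_sum_Ico_succ_bot (by omega) y
  rcases Nat.eq_zero_or_pos k with rfl | hk
  · omega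
  have hEv0 := hEv 0 hk
  have hOd0 := hOd 0 hk
  have hV0 : (∑ r ∈ Finset.Ico 0 k, a (2*r+1) * f (2*r+1)) = V 0 := rfl
  have hV1 : (∑ r ∈ Finset.Ico 1 k, a (2*r+1) * f (2*r+1)) = V 1 := rfl
  rw [show (2*0 : ℕ) = 0 from rfl, hV0] at hEv0
  rw [show (2*0+1 : ℕ) = 1 from rfl, hV1] at hOd0
  have hVs0 := hVsucc 0 hk
  have hy0 : y 0 = a 1 * f 1 := by norm_num [hy]
  have hP1 : 1 ≤ k → (∑ m ∈ Finset.range 2, a m * f m)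
      = - ∑ r ∈ Finset.Ico 1 k, a (2*r+1) * f (2*r+1) := by
    intro _
    rw [Finset.sum_range_succ, Finset.sum_range_one, hV1]
    have : a 1 * f 1 = y 0 := hy0.symm
    rw [this]
    -- a 0 * f 0 = - V 0 from hEv0 (a (2*0) = a 0, f (2*0) = f 0)
    have h00 : a 0 * f 0 = - V 0 := by linarith
    rw [h00, hVs0]; ring
  have hS0 : (a 1 - 1) * f 1 = 0 := by
    -- hOd0 : (∑ range 1) + f 1 + V 1 = 0 with ∑ range 1 = a 0 * f 0
    rw [Finset.sum_range_one] at hOd0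
    have h00 : a 0 * f 0 = - V 0 := by linarith
    rw [h00, hVs0, hy0] at hOd0
    ring_nf
    ring_nf at hOd0
    linarith
  obtain ⟨hVz, hDz⟩ := kernelShared k a f ha (fun t _ ht => hEv t ht) hOd hP1 hS0
  have hf1 : f 1 = 0 := by
    have := hDz 0 hk
    rw [show (2*0+1 : ℕ) = 1 from rfl] at this
    rcases mul_eq_zero.mp this with h | h
    · exact absurd (by linarith : a 1 = 1) ha1
    · exact h
  have hyz : ∀ t < k, y t = 0 := by
    intro t ht
    rcases Nat.eq_zero_or_pos t with rfl | hpos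
    · rw [hy0, hf1, mul_zero]
    · have h1 : V t = 0 := by
        have := hVz (t-1) (by omega)
        simpa [Nat.sub_add_cancel hpos] using this
      have h2 : V (t+1) = 0 := hVz t ht
      have := hVsucc t ht
      rw [h1, h2] at this
      linarith
  have hfodd : ∀ t < k, f (2*t+1) = 0 := by
    intro t ht
    have h1 := hyz t ht
    have h2 := ha (2*t+1) (by omega)
    rw [hy] at h1
    simp only [] at h1
    rcases mul_eq_zero.mp h1 with h | h
    · linarith
    · exact h
  have hVall : ∀ t < k, V t = 0 := by
    intro t ht
    rw [hVsucc t ht, hyz t ht]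
    rcases Nat.lt_or_ge (t+1) k with h | h
    · have h2 : V (t+1) = 0 := hVz t ht
      rw [h2]; ring
    · have : V (t+1) = 0 := by
        rw [hV]
        simp only []
        rw [Finset.Ico_eq_empty (by omega), Finset.sum_empty]
      rw [this]; ring
  have hfeven : ∀ t < k, f (2*t) = 0 := by
    intro t ht
    have h1 := hEv t ht
    have hVt : (∑ r ∈ Finset.Ico t k, a (2*r+1) * f (2*r+1)) = V t := rfl
    rw [hVt, hVall t ht] at h1
    have h2 := ha (2*t) (by omega)
    rcases mul_eq_zero.mp (by linarith : a (2*t) * f (2*t) = 0) with h | h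
    · linarith
    · exact h
  intro m hm
  rcases Nat.even_or_odd m with ⟨t, h⟩ | ⟨t, h⟩
  · have : m = 2*t := by omega
    subst this; exact hfeven t (by omega)
  · have : m = 2*t+1 := by omega
    subst this; exact hfodd t (by omega)

lemma kernelC (k : ℕ) (a f : ℕ → ℝ) (ha : ∀ i < 2*k, 1 ≤ a i) (ha1 : a 1 = 1)
    (hf01 : f 0 = f 1)
    (hEv : ∀ t, 1 ≤ t → t < k →
      a (2*t) * f (2*t) + (∑ r ∈ Finset.Ico t k, a (2*r+1) * f (2*r+1)) = 0)
    (hOd : ∀ t < k, (∑ m ∈ Finset.range (2*t+1), a m * f m) + f (2*t+1)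
      + (∑ r ∈ Finset.Ico (t+1) k, a (2*r+1) * f (2*r+1)) = 0) :
    ∀ m < 2*k, f m = 0 := by
  set y : ℕ → ℝ := fun r => a (2*r+1) * f (2*r+1) with hy
  set V : ℕ → ℝ := fun t => ∑ r ∈ Finset.Ico t k, y r with hV
  have hVsucc : ∀ t < k, V t = y t + V (t+1) := fun t ht =>
    Finset.sum_eq_sum_Ico_succ_bot (by omega) y
  rcases Nat.eq_zero_or_pos k with rfl | hk
  · omega
  have hOd0 := hOd 0 hk
  have hV1 : (∑ r ∈ Finset.Ico 1 k, a (2*r+1) * f (2*r+1)) = V 1 := rfl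
  rw [show (2*0+1 : ℕ) = 1 from rfl, hV1, Finset.sum_range_one, hf01] at hOd0
  -- hOd0 : a 0 * f 1 + f 1 + V 1 = 0
  have hP1 : 1 ≤ k → (∑ m ∈ Finset.range 2, a m * f m)
      = - ∑ r ∈ Finset.Ico 1 k, a (2*r+1) * f (2*r+1) := by
    intro _
    rw [Finset.sum_range_succ, Finset.sum_range_one, hV1, ha1, hf01]
    linarith
  have hS0 : (a 1 - 1) * f 1 = 0 := by rw [ha1]; ring
  obtain ⟨hVz, hDz⟩ := kernelShared k a f ha hEv hOd hP1 hS0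
  have hVz1 : V 1 = 0 := hVz 0 hk
  have hf1 : f 1 = 0 := by
    rw [hVz1] at hOd0
    have h0 := ha 0 (by omega)
    have : (a 0 + 1) * f 1 = 0 := by linarith
    rcases mul_eq_zero.mp this with h | h
    · linarith
    · exact h
  have hf0 : f 0 = 0 := by rw [hf01, hf1]
  have hy0 : y 0 = 0 := by rw [hy]; simp only []; norm_num [ha1, hf1]
  have hyz : ∀ t < k, y t = 0 := by
    intro t ht
    rcases Nat.eq_zero_or_pos t with rfl | hpos
    · exact hy0
    · have h1 : V t = 0 := by
        have := hVz (t-1) (by omega)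
        simpa [Nat.sub_add_cancel hpos] using this
      have h2 : V (t+1) = 0 := hVz t ht
      have := hVsucc t ht
      rw [h1, h2] at this
      linarith
  have hfodd : ∀ t < k, f (2*t+1) = 0 := by
    intro t ht
    have h1 := hyz t ht
    have h2 := ha (2*t+1) (by omega)
    rw [hy] at h1
    simp only [] at h1
    rcases mul_eq_zero.mp h1 with h | h
    · linarith
    · exact h
  have hVall : ∀ t < k, V t = 0 := by
    intro t ht
    rw [hVsucc t ht, hyz t ht]
    rcases Nat.lt_or_ge (t+1) k with h | h
    · have h2 : V (t+1) = 0 := hVz t ht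
      rw [h2]; ring
    · have : V (t+1) = 0 := by
        rw [hV]
        simp only []
        rw [Finset.Ico_eq_empty (by omega), Finset.sum_empty]
      rw [this]; ring
  have hfeven : ∀ t < k, f (2*t) = 0 := by
    intro t ht
    rcases Nat.eq_zero_or_pos t with rfl | hpos
    · exact hf0
    have h1 := hEv t hpos ht
    have hVt : (∑ r ∈ Finset.Ico t k, a (2*r+1) * f (2*r+1)) = V t := rfl
    rw [hVt, hVall t ht] at h1
    have h2 := ha (2*t) (by omega)
    rcases mul_eq_zero.mp (by linarith : a (2*t) * f (2*t) = 0) with h | h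
    · linarith
    · exact h
  intro m hm
  rcases Nat.even_or_odd m with ⟨t, h⟩ | ⟨t, h⟩
  · have : m = 2*t := by omega
    subst this; exact hfeven t (by omega)
  · have : m = 2*t+1 := by omega
    subst this; exact hfodd t (by omega)


lemma rowEven (α : ℕ → ℕ) (k : ℕ) (v : Fin (2*k) → ℝ) (f : ℕ → ℝ)
    (hf : ∀ (m : ℕ) (h : m < 2*k), f m = v ⟨m, h⟩)
    (t : ℕ) (ht : t < k) (i : Fin (2*k)) (hi : i.val = 2*t) :
    ∑ j, quotientMatrix α k i j * v j
      = ((α (2*t) : ℝ) - 1) * f (2*t)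
        + ∑ r ∈ Finset.Ico t k, (α (2*r+1) : ℝ) * f (2*r+1) := by
  set G : ℕ → ℝ := fun m =>
    (if m = 2*t then ((α (2*t) : ℝ) - 1) * f m else 0)
    + (if Odd m ∧ 2*t < m then (α m : ℝ) * f m else 0) with hG
  have hpt : ∀ j : Fin (2*k), quotientMatrix α k i j * v j = G j.val := by
    intro j
    have hvj : v j = f j.val := by simp [hf j.val j.isLt]
    rw [hG]
    simp only [quotientMatrix, Matrix.of_apply]
    by_cases hij : i = j
    · have hjv : j.val = 2*t := by rw [← hij, hi]
      rw [if_pos hij, if_pos (by rw [hi, Nat.odd_iff]; omega : Odd (i.val+1)),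
        if_pos hjv, if_neg (by rw [Nat.odd_iff]; omega : ¬(Odd j.val ∧ 2*t < j.val)),
        add_zero, hi, hjv, ← hjv, hvj]
    · have hjv : j.val ≠ 2*t := fun h => hij (Fin.ext (by omega))
      rw [if_neg hij, if_neg hjv, zero_add]
      have hc : ((Even (i.val + 1) ∧ j.val < i.val) ∨ (Even (j.val + 1) ∧ i.val < j.val))
          ↔ (Odd j.val ∧ 2*t < j.val) := by
        rw [hi]
        constructor
        · rintro (⟨h1, -⟩ | ⟨h1, h2⟩)
          · exfalso; rw [Nat.even_add_one, Nat.even_iff] at h1; omega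
          · exact ⟨Nat.not_even_iff_odd.mp (Nat.even_add_one.mp h1), h2⟩
        · rintro ⟨h1, h2⟩
          exact Or.inr ⟨by rwa [Nat.even_add_one, Nat.not_even_iff_odd], h2⟩
      by_cases hcond : Odd j.val ∧ 2*t < j.val
      · rw [if_pos (hc.mpr hcond), if_pos hcond, hvj]
      · rw [if_neg (fun h => hcond (hc.mp h)), if_neg hcond, zero_mul]
    
  rw [Finset.sum_congr rfl (fun j _ => hpt j)]
  rw [show (∑ j : Fin (2*k), G j.val) = ∑ m ∈ Finset.range (2*k), G m from
    Fin.sum_univ_eq_sum_range G (2*k)]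
  rw [hG, Finset.sum_add_distrib, Finset.sum_ite_eq' (Finset.range (2*k)) (2*t)
    (fun m => ((α (2*t) : ℝ) - 1) * f m),
    if_pos (Finset.mem_range.mpr (by omega)), oddSum k t (fun m => (α m : ℝ) * f m)]

lemma rowOdd (α : ℕ → ℕ) (k : ℕ) (v : Fin (2*k) → ℝ) (f : ℕ → ℝ)
    (hf : ∀ (m : ℕ) (h : m < 2*k), f m = v ⟨m, h⟩)
    (t : ℕ) (ht : t < k) (i : Fin (2*k)) (hi : i.val = 2*t+1) :
    ∑ j, quotientMatrix α k i j * v j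
      = (∑ m ∈ Finset.range (2*t+1), (α m : ℝ) * f m)
        + ∑ r ∈ Finset.Ico (t+1) k, (α (2*r+1) : ℝ) * f (2*r+1) := by
  set G : ℕ → ℝ := fun m =>
    (if m < 2*t+1 then (α m : ℝ) * f m else 0)
    + (if Odd m ∧ 2*(t+1) < m then (α m : ℝ) * f m else 0) with hG
  have hpt : ∀ j : Fin (2*k), quotientMatrix α k i j * v j = G j.val := by
    intro j
    have hvj : v j = f j.val := by simp [hf j.val j.isLt]
    rw [hG]
    simp only [quotientMatrix, Matrix.of_apply]
    by_cases hij : i = j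
    · have hjv : j.val = 2*t+1 := by rw [← hij, hi]
      rw [if_pos hij, if_neg (by rw [hi, Nat.odd_iff]; omega : ¬ Odd (i.val+1)),
        if_neg (by omega : ¬ j.val < 2*t+1),
        if_neg (by rw [hjv]; rintro ⟨-, h2⟩; omega), zero_mul, add_zero]
    · have hjv : j.val ≠ 2*t+1 := fun h => hij (Fin.ext (by omega))
      rw [if_neg hij]
      have hc : ((Even (i.val + 1) ∧ j.val < i.val) ∨ (Even (j.val + 1) ∧ i.val < j.val))
          ↔ (j.val < 2*t+1 ∨ (Odd j.val ∧ 2*(t+1) < j.val)) := by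
        rw [hi]
        constructor
        · rintro (⟨-, h2⟩ | ⟨h1, h2⟩)
          · exact Or.inl h2
          · have ho := Nat.not_even_iff_odd.mp (Nat.even_add_one.mp h1)
            refine Or.inr ⟨ho, ?_⟩
            rw [Nat.odd_iff] at ho; omega
        · rintro (h | ⟨h1, h2⟩)
          · exact Or.inl ⟨by rw [Nat.even_iff]; omega, h⟩
          · exact Or.inr ⟨by rwa [Nat.even_add_one, Nat.not_even_iff_odd], by omega⟩
      by_cases h1 : j.val < 2*t+1
      · rw [if_pos (hc.mpr (Or.inl h1)), if_pos h1,
          if_neg (by rintro ⟨-, h2⟩; omega), hvj, add_zero]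
      · by_cases h2 : Odd j.val ∧ 2*(t+1) < j.val
        · rw [if_pos (hc.mpr (Or.inr h2)), if_neg h1, if_pos h2, hvj, zero_add]
        · rw [if_neg (fun hx => (hc.mp hx).elim h1 h2), if_neg h1, if_neg h2,
            zero_mul, add_zero]
  rw [Finset.sum_congr rfl (fun j _ => hpt j)]
  rw [show (∑ j : Fin (2*k), G j.val) = ∑ m ∈ Finset.range (2*k), G m from
    Fin.sum_univ_eq_sum_range G (2*k)]
  rw [hG, Finset.sum_add_distrib, prefSum (2*k) (2*t+1) (by omega) (fun m => (α m : ℝ) * f m),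
    oddSum k (t+1) (fun m => (α m : ℝ) * f m)]


/-- `-1` is a root of the characteristic polynomial of `Q_π(G)` iff `α_2 = 1`,
in which case it is a simple root. (Paper's `α_2` is `α 1` in our 0-based indexing.) -/
theorem stmt6 (k : ℕ) (hk : 1 ≤ k) (α : ℕ → ℕ) (hα : ∀ i < 2 * k, 0 < α i) :
    ((quotientMatrix α k).charpoly.IsRoot (-1) ↔ α 1 = 1) ∧
      (α 1 = 1 → (quotientMatrix α k).charpoly.rootMultiplicity (-1) = 1) := by
  have hone : ∀ i < 2*k, (1:ℝ) ≤ (α i : ℝ) := fun i hi => by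
    exact_mod_cast hα i hi
  set Q := quotientMatrix α k with hQdef
  set A₁ : Matrix (Fin (2*k)) (Fin (2*k)) ℝ :=
    Matrix.of (fun i j => (if i = j then (-1:ℝ) else 0) - Q i j) with hA₁
  -- eval of charpoly at -1
  have hevalmap : (charmatrix Q).map (Polynomial.eval (-1)) = A₁ := by
    ext i j
    rw [Matrix.map_apply, charmatrix_apply, hA₁]
    by_cases h : i = j
    · subst h
      simp [Matrix.of_apply]
    · simp [Matrix.diagonal_apply_ne _ h, Matrix.of_apply, h]
  have heval : Q.charpoly.eval (-1) = A₁.det := by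
    have h2 := RingHom.map_det (Polynomial.evalRingHom (-1 : ℝ)) (charmatrix Q)
    rw [RingHom.mapMatrix_apply, Polynomial.coe_evalRingHom] at h2
    have h3 : Q.charpoly = (charmatrix Q).det := rfl
    rw [h3, h2, hevalmap]
  have hcp0 : Q.charpoly ≠ 0 := (Matrix.charpoly_monic Q).ne_zero
  -- the mulVec row formula for A₁
  have hmulvec : ∀ (v : Fin (2*k) → ℝ) (i : Fin (2*k)),
      A₁.mulVec v i = - v i - ∑ j, Q i j * v j := by
    intro v i
    rw [hA₁]
    simp only [Matrix.mulVec, dotProduct, Matrix.of_apply, sub_mul]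
    rw [Finset.sum_sub_distrib]
    congr 1
    simp [ite_mul]
  -- rows of A₁ as equations
  have hEvOf : ∀ (v : Fin (2*k) → ℝ) (f : ℕ → ℝ),
      (∀ (m : ℕ) (h : m < 2*k), f m = v ⟨m, h⟩) →
      ∀ t (ht : t < k), (∑ j, Q (⟨2*t, by omega⟩ : Fin (2*k)) j * v j = - v ⟨2*t, by omega⟩) →
      (α (2*t) : ℝ) * f (2*t)
        + (∑ r ∈ Finset.Ico t k, (α (2*r+1):ℝ) * f (2*r+1)) = 0 := by
    intro v f hf t ht hrow
    have h2 := rowEven α k v f hf t ht ⟨2*t, by omega⟩ rfl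
    rw [← hQdef] at h2
    rw [h2] at hrow
    have h4 : v ⟨2*t, by omega⟩ = f (2*t) := (hf (2*t) (by omega)).symm
    rw [h4] at hrow
    linarith
  have hOdOf : ∀ (v : Fin (2*k) → ℝ) (f : ℕ → ℝ),
      (∀ (m : ℕ) (h : m < 2*k), f m = v ⟨m, h⟩) →
      ∀ t (ht : t < k), (∑ j, Q (⟨2*t+1, by omega⟩ : Fin (2*k)) j * v j = - v ⟨2*t+1, by omega⟩) →
      (∑ m ∈ Finset.range (2*t+1), (α m:ℝ) * f m) + f (2*t+1)
        + (∑ r ∈ Finset.Ico (t+1) k, (α (2*r+1):ℝ) * f (2*r+1)) = 0 := by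
    intro v f hf t ht hrow
    have h2 := rowOdd α k v f hf t ht ⟨2*t+1, by omega⟩ rfl
    rw [← hQdef] at h2
    rw [h2] at hrow
    have h4 : v ⟨2*t+1, by omega⟩ = f (2*t+1) := (hf (2*t+1) (by omega)).symm
    rw [h4] at hrow
    linarith
  -- case α 1 ≠ 1 : A₁ invertible
  have hdetA₁ : α 1 ≠ 1 → A₁.det ≠ 0 := by
    intro hna1 hdet
    obtain ⟨v, hvne, hmv⟩ := Matrix.exists_mulVec_eq_zero_iff.mpr hdet
    set f : ℕ → ℝ := fun m => if h : m < 2*k then v ⟨m, h⟩ else 0 with hfdef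
    have hf : ∀ (m : ℕ) (h : m < 2*k), f m = v ⟨m, h⟩ := fun m h => dif_pos h
    have hrs : ∀ i : Fin (2*k), ∑ j, Q i j * v j = - v i := by
      intro i
      have h5 := congrFun hmv i
      rw [hmulvec v i] at h5
      simp only [Pi.zero_apply] at h5
      linarith
    have hall := kernelA k (fun m => (α m : ℝ)) f hone
      (fun h => hna1 (by
        have h' : ((α 1 : ℕ) : ℝ) = 1 := h
        exact_mod_cast h'))
      (fun t ht => hEvOf v f hf t ht (hrs _))
      (fun t ht => hOdOf v f hf t ht (hrs _))
    apply hvne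
    funext i
    have h6 : f i.val = 0 := hall i.val i.isLt
    rw [hf i.val i.isLt] at h6
    simpa using h6
  -- multiplicity part
  have hmult : α 1 = 1 → Q.charpoly.rootMultiplicity (-1) = 1 := by
    intro h1
    set i0 : Fin (2*k) := ⟨0, by omega⟩ with hi0
    set i1 : Fin (2*k) := ⟨1, by omega⟩ with hi1
    have hne01 : i0 ≠ i1 := Fin.ne_of_val_ne (by norm_num)
    have hQ00 : Q i0 i0 = (α 0 : ℝ) - 1 := by
      simp [hQdef, quotientMatrix, hi0, Nat.odd_iff]
    have hQ01 : Q i0 i1 = (α 1 : ℝ) := by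
      simp only [hQdef, quotientMatrix, Matrix.of_apply, if_neg hne01, hi0, hi1]
      rw [if_pos (Or.inr ⟨by simp [Nat.even_iff], by omega⟩)]
      exact if_neg (Fin.ne_of_val_ne (by norm_num))
    have hQ10 : Q i1 i0 = (α 0 : ℝ) := by
      simp only [hQdef, quotientMatrix, Matrix.of_apply, if_neg (Ne.symm hne01), hi0, hi1]
      rw [if_pos (Or.inl ⟨by simp [Nat.even_iff], by omega⟩)]
      exact if_neg (Fin.ne_of_val_ne (by norm_num))
    have hQ11 : Q i1 i1 = 0 := by
      simp [hQdef, quotientMatrix, hi1, Nat.odd_iff]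
    have hQrow : ∀ j : Fin (2*k), j ≠ i0 → j ≠ i1 → Q i0 j = Q i1 j := by
      intro j hj0 hj1
      have hjval : 2 ≤ j.val := by
        have h0 : j.val ≠ 0 := fun h => hj0 (Fin.ext h)
        have h1' : j.val ≠ 1 := fun h => hj1 (Fin.ext h)
        omega
      have hj0' : ¬ ((⟨0, by omega⟩ : Fin (2*k)) = j) := fun h => hj0 (by rw [← h])
      have hj1' : ¬ ((⟨1, by omega⟩ : Fin (2*k)) = j) := fun h => hj1 (by rw [← h])
      simp only [hQdef, quotientMatrix, Matrix.of_apply,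
        if_neg (Ne.symm hj0), if_neg (Ne.symm hj1), hi0, hi1, if_neg hj0', if_neg hj1']
      by_cases he : Even (j.val + 1)
      · rw [if_pos (Or.inr ⟨he, by omega⟩), if_pos (Or.inr ⟨he, by omega⟩)]
      · rw [if_neg, if_neg]
        · rintro (⟨h, hlt⟩ | ⟨h, -⟩)
          · first
              | (rw [Nat.even_iff] at h; omega)
              | (norm_num at hlt; omega)
          · exact he h
        · rintro (⟨h, hlt⟩ | ⟨h, -⟩)
          · first
              | (rw [Nat.even_iff] at h; omega)
              | (norm_num at hlt; omega)
          · exact he h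
    set cm := charmatrix Q with hcm
    set w : Fin (2*k) → ℝ[X] :=
      fun j => if j = i0 then 1 else if j = i1 then -1 else 0 with hw
    have hrow0 : cm i0 + (-1 : ℝ[X]) • cm i1 = ((Polynomial.X + 1 : ℝ[X])) • w := by
      funext j
      simp only [Pi.add_apply, Pi.smul_apply, smul_eq_mul, neg_one_mul, hw, hcm]
      by_cases hj0 : j = i0
      · subst hj0
        rw [charmatrix_apply_eq, charmatrix_apply_ne _ _ _ (Ne.symm hne01), hQ00, hQ10,
          if_pos rfl]
        rw [map_sub, _root_.map_one]
        ring
      · by_cases hj1 : j = i1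
        · subst hj1
          rw [charmatrix_apply_ne _ _ _ hne01, charmatrix_apply_eq, hQ01, hQ11, h1,
            if_neg hj0, if_pos rfl]
          simp
        · rw [charmatrix_apply_ne _ _ _ (fun h => hj0 h.symm),
            charmatrix_apply_ne _ _ _ (fun h => hj1 h.symm),
            hQrow j hj0 hj1, if_neg hj0, if_neg hj1]
          ring
    set q : ℝ[X] := (cm.updateRow i0 w).det with hq
    have hfact : Q.charpoly = (Polynomial.X + 1 : ℝ[X]) * q := by
      have h3 : Q.charpoly = cm.det := rfl
      rw [h3, ← Matrix.det_updateRow_add_smul_self cm hne01 (-1 : ℝ[X]), hrow0,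
        Matrix.det_updateRow_smul]
    -- evaluate q at -1
    set w' : Fin (2*k) → ℝ :=
      fun j => if j = i0 then (1:ℝ) else if j = i1 then -1 else 0 with hw'
    set A₂ := A₁.updateRow i0 w' with hA₂
    have hqeval : q.eval (-1) = A₂.det := by
      have h2 := RingHom.map_det (Polynomial.evalRingHom (-1 : ℝ)) (cm.updateRow i0 w)
      rw [RingHom.mapMatrix_apply, Polynomial.coe_evalRingHom] at h2
      have hupd : (cm.updateRow i0 w).map (Polynomial.eval (-1)) = A₂ := by
        ext i j
        rw [Matrix.map_apply, hA₂, Matrix.updateRow_apply, Matrix.updateRow_apply]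
        by_cases hii : i = i0
        · rw [if_pos hii, if_pos hii, hw, hw']
          by_cases hj0 : j = i0
          · simp [hj0]
          · by_cases hj1 : j = i1
            · simp [hj0, hj1, Ne.symm hne01]
            · simp [hj0, hj1]
        · rw [if_neg hii, if_neg hii, ← hevalmap, Matrix.map_apply]
      rw [hq, h2, hupd]
    -- A₂ is invertible
    have hdetA₂ : A₂.det ≠ 0 := by
      intro hdet
      obtain ⟨v, hvne, hmv⟩ := Matrix.exists_mulVec_eq_zero_iff.mpr hdet
      set f : ℕ → ℝ := fun m => if h : m < 2*k then v ⟨m, h⟩ else 0 with hfdef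
      have hf : ∀ (m : ℕ) (h : m < 2*k), f m = v ⟨m, h⟩ := fun m h => dif_pos h
      have hrs : ∀ i : Fin (2*k), i ≠ i0 → ∑ j, Q i j * v j = - v i := by
        intro i hine
        have h5 := congrFun hmv i
        have h6 : A₂.mulVec v i = A₁.mulVec v i := by
          rw [hA₂]
          simp [Matrix.mulVec, Matrix.updateRow_ne hine]
        rw [h6, hmulvec v i] at h5
        simp only [Pi.zero_apply] at h5
        linarith
      have hf01 : f 0 = f 1 := by
        have h5 := congrFun hmv i0
        have h6 : A₂.mulVec v i0 = v i0 - v i1 := by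
          rw [hA₂, hw']
          simp only [Matrix.mulVec, dotProduct, Matrix.updateRow_self]
          have hpt : ∀ j : Fin (2*k), (if j = i0 then (1:ℝ) else if j = i1 then -1 else 0) * v j
              = (if j = i0 then v j else 0) + (if j = i1 then -v j else 0) := by
            intro j
            by_cases h0 : j = i0
            · subst h0
              rw [if_pos rfl, if_pos rfl, if_neg hne01, one_mul, add_zero]
            · by_cases h1' : j = i1
              · subst h1'
                rw [if_neg h0, if_neg h0, if_pos rfl, if_pos rfl, zero_add]
                ring
              · rw [if_neg h0, if_neg h0, if_neg h1', if_neg h1', zero_mul, add_zero]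
          rw [Finset.sum_congr rfl (fun j _ => hpt j), Finset.sum_add_distrib]
          rw [Finset.sum_ite_eq' Finset.univ i0 (fun j => v j),
            Finset.sum_ite_eq' Finset.univ i1 (fun j => -v j)]
          simp
          ring
        rw [h6] at h5
        simp only [Pi.zero_apply] at h5
        rw [hf 0 (by omega), hf 1 (by omega)]
        have e0 : (⟨0, by omega⟩ : Fin (2*k)) = i0 := rfl
        have e1 : (⟨1, by omega⟩ : Fin (2*k)) = i1 := rfl
        rw [e0, e1]
        linarith
      have hall := kernelC k (fun m => (α m : ℝ)) f hone
        (show ((α 1 : ℕ) : ℝ) = 1 by exact_mod_cast h1) hf01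
        (fun t hpos ht => hEvOf v f hf t ht (hrs _ (by
          intro hcon
          have : (2*t : ℕ) = 0 := by
            have := congrArg Fin.val hcon
            simpa [hi0] using this
          omega)))
        (fun t ht => hOdOf v f hf t ht (hrs _ (by
          intro hcon
          have : (2*t+1 : ℕ) = 0 := by
            have := congrArg Fin.val hcon
            simpa [hi0] using this
          omega)))
      apply hvne
      funext i
      have h6 : f i.val = 0 := hall i.val i.isLt
      rw [hf i.val i.isLt] at h6
      simpa using h6
    -- put it together
    rw [hfact, Polynomial.rootMultiplicity_mul (by rw [← hfact]; exact hcp0)]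
    have hX : ((Polynomial.X + 1 : ℝ[X])).rootMultiplicity (-1) = 1 := by
      have hXC : (Polynomial.X + 1 : ℝ[X]) = Polynomial.X - Polynomial.C (-1) := by
        rw [map_neg, _root_.map_one]
        ring
      rw [hXC, Polynomial.rootMultiplicity_X_sub_C_self]
    have hqm : q.rootMultiplicity (-1) = 0 := by
      apply Polynomial.rootMultiplicity_eq_zero
      intro hroot
      exact hdetA₂ (by rw [← hqeval]; exact hroot)
    rw [hX, hqm]
  refine ⟨⟨fun hroot => ?_, fun h1 => ?_⟩, hmult⟩
  · by_contra hna1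
    exact (hdetA₁ hna1) (by rw [← heval]; exact hroot)
  · have hm := hmult h1
    exact (Polynomial.rootMultiplicity_pos hcp0).mp (by rw [hm]; norm_num)
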